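/- The Z-tetromino does not tile any rectangle: no rectangle can be partitioned into isometric copies of the S/Z-shaped tetromino. In particular, in any partial tiling of a horizontal strip of height 2 by Z-tetrominoes starting from the left edge, some cell adjacent to the left boundary or bottom row can never be covered without the piece exceeding the strip on the left or bottom. -/

import Mathlib

/-- The grid graph on `ℤ²`: two cells are adjacent when they share an edge. -/
def GZ : SimpleGraph (ℤ × ℤ) where
  Adj u v := |u.1 - v.1| + |u.2 - v.2| = 1
  symm := by
    constructor
    intro u v h
    rw [abs_sub_comm u.1, abs_sub_comm u.2] at h
    exact h
  loopless := by
    constructor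
    intro u h
    simp at h

/-- `Q` is an isometric copy of `P` (rotations, reflections and translations). -/
def IsoCopy (P Q : Finset (ℤ × ℤ)) : Prop :=
  ∃ (t : ℤ × ℤ) (r : ℕ) (s : Bool),
    Q = P.image (fun p =>
      ((fun q : ℤ × ℤ => (-q.2, q.1))^[r] (if s then (p.1, -p.2) else p)) + t)

/-- `P` tiles the region `X`: `X` can be partitioned into isometric copies of `P`. -/
def Tiles (P : Finset (ℤ × ℤ)) (X : Set (ℤ × ℤ)) : Prop :=
  ∃ C : Set (Finset (ℤ × ℤ)),
    (∀ Q ∈ C, IsoCopy P Q) ∧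
    (∀ z : ℤ × ℤ, z ∈ X ↔ ∃ Q ∈ C, z ∈ Q) ∧
    (∀ Q ∈ C, ∀ Q' ∈ C, Q ≠ Q' → ∀ z : ℤ × ℤ, z ∈ Q → z ∉ Q')

/-- The `n × m` rectangle `[1,n] × [1,m]` of `ℤ²`. -/
def Rect (n m : ℕ) : Set (ℤ × ℤ) :=
  {z | 1 ≤ z.1 ∧ z.1 ≤ (n : ℤ) ∧ 1 ≤ z.2 ∧ z.2 ≤ (m : ℤ)}

/-- The Z-tetromino. -/
def Ztet : Finset (ℤ × ℤ) :=
  {((0 : ℤ), (0 : ℤ)), (1, 0), (1, 1), (2, 1)}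

namespace ZNoRect

def HZ (a b : ℤ) : Finset (ℤ × ℤ) := {(a,b),(a+1,b),(a+1,b+1),(a+2,b+1)}
def SS (a b : ℤ) : Finset (ℤ × ℤ) := {(a,b+1),(a+1,b+1),(a+1,b),(a+2,b)}
def V1 (a b : ℤ) : Finset (ℤ × ℤ) := {(a,b+1),(a,b+2),(a+1,b),(a+1,b+1)}
def V2 (a b : ℤ) : Finset (ℤ × ℤ) := {(a,b),(a,b+1),(a+1,b+1),(a+1,b+2)}

lemma mem_HZ {a b x y : ℤ} : (x,y) ∈ HZ a b ↔
    (x = a ∧ y = b) ∨ (x = a+1 ∧ y = b) ∨ (x = a+1 ∧ y = b+1) ∨ (x = a+2 ∧ y = b+1) := by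
  simp [HZ, Prod.ext_iff]

lemma mem_SS {a b x y : ℤ} : (x,y) ∈ SS a b ↔
    (x = a ∧ y = b+1) ∨ (x = a+1 ∧ y = b+1) ∨ (x = a+1 ∧ y = b) ∨ (x = a+2 ∧ y = b) := by
  simp [SS, Prod.ext_iff]

lemma mem_V1 {a b x y : ℤ} : (x,y) ∈ V1 a b ↔
    (x = a ∧ y = b+1) ∨ (x = a ∧ y = b+2) ∨ (x = a+1 ∧ y = b) ∨ (x = a+1 ∧ y = b+1) := by
  simp [V1, Prod.ext_iff]

lemma mem_V2 {a b x y : ℤ} : (x,y) ∈ V2 a b ↔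
    (x = a ∧ y = b) ∨ (x = a ∧ y = b+1) ∨ (x = a+1 ∧ y = b+1) ∨ (x = a+1 ∧ y = b+2) := by
  simp [V2, Prod.ext_iff]

def rotZ (q : ℤ × ℤ) : ℤ × ℤ := (-q.2, q.1)

lemma rotZ_four : rotZ^[4] = id := by
  funext q; show rotZ (rotZ (rotZ (rotZ q))) = q; simp [rotZ]

lemma rotZ_iter (r : ℕ) (q : ℤ × ℤ) : rotZ^[r] q = rotZ^[r % 4] q := by
  conv_lhs => rw [← Nat.div_add_mod r 4, Nat.add_comm]
  rw [Function.iterate_add_apply, Function.iterate_mul, rotZ_four]; simp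

lemma isoCopy_cases {Q : Finset (ℤ × ℤ)} (h : IsoCopy Ztet Q) :
    ∃ a b : ℤ, Q = HZ a b ∨ Q = SS a b ∨ Q = V1 a b ∨ Q = V2 a b := by
  obtain ⟨⟨t1, t2⟩, r, s, rfl⟩ := h
  have key : ∀ x : ℤ × ℤ, (fun q : ℤ × ℤ => (-q.2, q.1))^[r] x = rotZ^[r % 4] x :=
    fun x => rotZ_iter r x
  simp only [key]
  have hmod : r % 4 = 0 ∨ r % 4 = 1 ∨ r % 4 = 2 ∨ r % 4 = 3 := by omega
  rcases hmod with h4 | h4 | h4 | h4 <;> rw [h4] <;> cases s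
  next => exact ⟨t1, t2, Or.inl (by
    ext ⟨x, y⟩; simp [Ztet, HZ, rotZ, Prod.ext_iff, Function.iterate_succ_apply']; omega)⟩
  next => exact ⟨t1, t2 - 1, Or.inr (Or.inl (by
    ext ⟨x, y⟩; simp [Ztet, SS, rotZ, Prod.ext_iff, Function.iterate_succ_apply']; omega))⟩
  next => exact ⟨t1 - 1, t2, Or.inr (Or.inr (Or.inl (by
    ext ⟨x, y⟩; simp [Ztet, V1, rotZ, Prod.ext_iff, Function.iterate_succ_apply']; omega)))⟩
  next => exact ⟨t1, t2, Or.inr (Or.inr (Or.inr (by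
    ext ⟨x, y⟩; simp [Ztet, V2, rotZ, Prod.ext_iff, Function.iterate_succ_apply']; omega)))⟩
  next => exact ⟨t1 - 2, t2 - 1, Or.inl (by
    ext ⟨x, y⟩; simp [Ztet, HZ, rotZ, Prod.ext_iff, Function.iterate_succ_apply']; omega)⟩
  next => exact ⟨t1 - 2, t2, Or.inr (Or.inl (by
    ext ⟨x, y⟩; simp [Ztet, SS, rotZ, Prod.ext_iff, Function.iterate_succ_apply']; omega))⟩
  next => exact ⟨t1, t2 - 2, Or.inr (Or.inr (Or.inl (by
    ext ⟨x, y⟩; simp [Ztet, V1, rotZ, Prod.ext_iff, Function.iterate_succ_apply']; omega)))⟩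
  next => exact ⟨t1 - 1, t2 - 2, Or.inr (Or.inr (Or.inr (by
    ext ⟨x, y⟩; simp [Ztet, V2, rotZ, Prod.ext_iff, Function.iterate_succ_apply']; omega)))⟩

section Tiling

variable {C : Set (Finset (ℤ × ℤ))} {X : Set (ℤ × ℤ)}

lemma hz_step
    (hiso : ∀ Q ∈ C, IsoCopy Ztet Q)
    (hcov : ∀ z : ℤ × ℤ, z ∈ X ↔ ∃ Q ∈ C, z ∈ Q)
    (hdisj : ∀ Q ∈ C, ∀ Q' ∈ C, Q ≠ Q' → ∀ z : ℤ × ℤ, z ∈ Q → z ∉ Q')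
    (hX : ∀ z ∈ X, (1:ℤ) ≤ z.2)
    {P : Finset (ℤ × ℤ)} (hP : P ∈ C) {c : ℤ}
    (h1 : ((c-1, 1) : ℤ × ℤ) ∈ P) (h2 : ((c-1, 2) : ℤ × ℤ) ∈ P)
    (h3 : ((c, 2) : ℤ × ℤ) ∈ P) (h4 : ((c, 1) : ℤ × ℤ) ∉ P)
    (hc : ((c, 1) : ℤ × ℤ) ∈ X) : HZ c 1 ∈ C := by
  obtain ⟨Q, hQ, hzQ⟩ := (hcov _).1 hc
  have hy : ∀ z ∈ Q, (1:ℤ) ≤ z.2 := fun z hz => hX z ((hcov z).2 ⟨Q, hQ, hz⟩)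
  have hne : Q ≠ P := fun h => h4 (h ▸ hzQ)
  have clash : ∀ z : ℤ × ℤ, z ∈ Q → z ∈ P → False :=
    fun z hzq hzp => hdisj Q hQ P hP hne z hzq hzp
  obtain ⟨a, b, hs | hs | hs | hs⟩ := isoCopy_cases (hiso Q hQ) <;> subst hs
  · -- HZ a b
    have c1 : (1:ℤ) ≤ b := hy (a,b) (mem_HZ.2 (by omega))
    rcases mem_HZ.1 hzQ with h | h | h | h
    · obtain ⟨rfl, rfl⟩ : a = c ∧ b = 1 := ⟨h.1.symm, h.2.symm⟩
      exact hQ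
    · exact absurd (clash (c-1,1) (mem_HZ.2 (by omega)) h1) not_false
    · omega
    · omega
  · -- SS a b
    have c1 : (1:ℤ) ≤ b := hy (a+1,b) (mem_SS.2 (by omega))
    rcases mem_SS.1 hzQ with h | h | h | h
    · omega
    · omega
    · exact absurd (clash (c-1,2) (mem_SS.2 (by omega)) h2) not_false
    · exact absurd (clash (c-1,1) (mem_SS.2 (by omega)) h1) not_false
  · -- V1 a b
    have c1 : (1:ℤ) ≤ b := hy (a+1,b) (mem_V1.2 (by omega))
    rcases mem_V1.1 hzQ with h | h | h | h
    · omega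
    · omega
    · exact absurd (clash (c-1,2) (mem_V1.2 (by omega)) h2) not_false
    · omega
  · -- V2 a b
    have c1 : (1:ℤ) ≤ b := hy (a,b) (mem_V2.2 (by omega))
    rcases mem_V2.1 hzQ with h | h | h | h
    · exact absurd (clash (c,2) (mem_V2.2 (by omega)) h3) not_false
    · omega
    · omega
    · omega

lemma corner
    (hiso : ∀ Q ∈ C, IsoCopy Ztet Q)
    (hcov : ∀ z : ℤ × ℤ, z ∈ X ↔ ∃ Q ∈ C, z ∈ Q)
    (hX : ∀ z ∈ X, (1:ℤ) ≤ z.1 ∧ (1:ℤ) ≤ z.2)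
    (hc : ((1, 1) : ℤ × ℤ) ∈ X) : HZ 1 1 ∈ C ∨ V2 1 1 ∈ C := by
  obtain ⟨Q, hQ, hzQ⟩ := (hcov _).1 hc
  have hy : ∀ z ∈ Q, (1:ℤ) ≤ z.1 ∧ (1:ℤ) ≤ z.2 :=
    fun z hz => hX z ((hcov z).2 ⟨Q, hQ, hz⟩)
  obtain ⟨a, b, hs | hs | hs | hs⟩ := isoCopy_cases (hiso Q hQ) <;> subst hs
  · have c1 : (1:ℤ) ≤ a ∧ (1:ℤ) ≤ b := hy (a,b) (mem_HZ.2 (by omega))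
    rcases mem_HZ.1 hzQ with h | h | h | h
    · obtain ⟨rfl, rfl⟩ : a = 1 ∧ b = 1 := ⟨h.1.symm, h.2.symm⟩
      exact Or.inl hQ
    · omega
    · omega
    · omega
  · have c1 : (1:ℤ) ≤ a+1 ∧ (1:ℤ) ≤ b := hy (a+1,b) (mem_SS.2 (by omega))
    have c2 : (1:ℤ) ≤ a ∧ (1:ℤ) ≤ b+1 := hy (a,b+1) (mem_SS.2 (by omega))
    rcases mem_SS.1 hzQ with h | h | h | h <;> omega
  · have c1 : (1:ℤ) ≤ a+1 ∧ (1:ℤ) ≤ b := hy (a+1,b) (mem_V1.2 (by omega))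
    have c2 : (1:ℤ) ≤ a ∧ (1:ℤ) ≤ b+1 := hy (a,b+1) (mem_V1.2 (by omega))
    rcases mem_V1.1 hzQ with h | h | h | h <;> omega
  · have c1 : (1:ℤ) ≤ a ∧ (1:ℤ) ≤ b := hy (a,b) (mem_V2.2 (by omega))
    rcases mem_V2.1 hzQ with h | h | h | h
    · obtain ⟨rfl, rfl⟩ : a = 1 ∧ b = 1 := ⟨h.1.symm, h.2.symm⟩
      exact Or.inr hQ
    · omega
    · omega
    · omega

lemma hz_next
    (hiso : ∀ Q ∈ C, IsoCopy Ztet Q)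
    (hcov : ∀ z : ℤ × ℤ, z ∈ X ↔ ∃ Q ∈ C, z ∈ Q)
    (hdisj : ∀ Q ∈ C, ∀ Q' ∈ C, Q ≠ Q' → ∀ z : ℤ × ℤ, z ∈ Q → z ∉ Q')
    (hX : ∀ z ∈ X, (1:ℤ) ≤ z.2)
    {c : ℤ} (hHZ : HZ c 1 ∈ C) (hc : ((c + 2, 1) : ℤ × ℤ) ∈ X) :
    HZ (c + 2) 1 ∈ C := by
  refine hz_step hiso hcov hdisj hX hHZ (c := c + 2)
    (mem_HZ.2 (by omega)) (mem_HZ.2 (by omega)) (mem_HZ.2 (by omega))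
    (fun hmem => by have := mem_HZ.1 hmem; omega) hc

end Tiling

end ZNoRect

open ZNoRect

/-- The Z-tetromino does not tile any (nonempty) rectangle; in particular it
cannot tile the height-2 half-strip bounded on the left and bottom. -/
theorem Z_tetromino_tiles_no_rectangle :
    (∀ n m : ℕ, 1 ≤ n → 1 ≤ m → ¬ Tiles Ztet (Rect n m)) ∧
    ¬ Tiles Ztet {z : ℤ × ℤ | 1 ≤ z.1 ∧ 1 ≤ z.2 ∧ z.2 ≤ 2} := by
  constructor
  · rintro n m hn hm ⟨C, hiso, hcov, hdisj⟩
    have hXq : ∀ z ∈ Rect n m, (1:ℤ) ≤ z.1 ∧ (1:ℤ) ≤ z.2 := by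
      rintro z ⟨a1, a2, a3, a4⟩; exact ⟨a1, a3⟩
    have hXy : ∀ z ∈ Rect n m, (1:ℤ) ≤ z.2 := fun z hz => (hXq z hz).2
    have hmem : ∀ Q ∈ C, ∀ z ∈ Q, z ∈ Rect n m :=
      fun Q hQ z hz => (hcov z).2 ⟨Q, hQ, hz⟩
    have hc11 : ((1,1) : ℤ × ℤ) ∈ Rect n m := by
      simp only [Rect, Set.mem_setOf_eq]
      refine ⟨by norm_num, ?_, by norm_num, ?_⟩ <;> simp <;> omega
    -- base: a horizontal Z based on the bottom row somewhere
    have base : ∃ c0 : ℤ, 1 ≤ c0 ∧ HZ c0 1 ∈ C := by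
      rcases corner hiso hcov hXq hc11 with hb | hb
      · exact ⟨1, le_refl _, hb⟩
      · have h23 : ((2,3) : ℤ × ℤ) ∈ Rect n m :=
          hmem _ hb (2,3) (mem_V2.2 (by omega))
        have h21 : ((2,1) : ℤ × ℤ) ∈ Rect n m := by
          simp only [Rect, Set.mem_setOf_eq] at h23 ⊢
          omega
        refine ⟨2, by norm_num, hz_step hiso hcov hdisj hXy hb (c := 2)
          (mem_V2.2 (by omega)) (mem_V2.2 (by omega)) (mem_V2.2 (by omega))
          (fun hmem' => by have := mem_V2.1 hmem'; omega) h21⟩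
    obtain ⟨c0, hc0, hbase⟩ := base
    have ind : ∀ k : ℕ, HZ (c0 + 2 * (k:ℤ)) 1 ∈ C := by
      intro k
      induction k with
      | zero => simpa using hbase
      | succ k ih =>
        have hcell : ((c0 + 2*(k:ℤ) + 2, 2) : ℤ × ℤ) ∈ Rect n m :=
          hmem _ ih (c0 + 2*(k:ℤ) + 2, 2) (mem_HZ.2 (by omega))
        have hnext : ((c0 + 2*(k:ℤ) + 2, 1) : ℤ × ℤ) ∈ Rect n m := by
          simp only [Rect, Set.mem_setOf_eq] at hcell ⊢
          have : (1:ℤ) ≤ m := by exact_mod_cast hm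
          omega
        have hstep := hz_next hiso hcov hdisj hXy ih hnext
        have heq : c0 + 2 * ((k:ℤ) + 1) = c0 + 2*(k:ℤ) + 2 := by ring
        rw [Nat.cast_succ, heq]
        exact hstep
    have hbig := ind n
    have hcell : ((c0 + 2*(n:ℤ) + 2, 2) : ℤ × ℤ) ∈ Rect n m :=
      hmem _ hbig (c0 + 2*(n:ℤ) + 2, 2) (mem_HZ.2 (by omega))
    simp only [Rect, Set.mem_setOf_eq] at hcell
    omega
  · rintro ⟨C, hiso, hcov, hdisj⟩
    have hXq : ∀ z ∈ {z : ℤ × ℤ | 1 ≤ z.1 ∧ 1 ≤ z.2 ∧ z.2 ≤ 2},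
        (1:ℤ) ≤ z.1 ∧ (1:ℤ) ≤ z.2 := by
      rintro z ⟨a1, a2, a3⟩; exact ⟨a1, a2⟩
    have hmem : ∀ Q ∈ C, ∀ z ∈ Q,
        (1:ℤ) ≤ z.1 ∧ (1:ℤ) ≤ z.2 ∧ z.2 ≤ 2 :=
      fun Q hQ z hz => (hcov z).2 ⟨Q, hQ, hz⟩
    have hc11 : ((1,1) : ℤ × ℤ) ∈ {z : ℤ × ℤ | 1 ≤ z.1 ∧ 1 ≤ z.2 ∧ z.2 ≤ 2} :=
      ⟨by norm_num, by norm_num, by norm_num⟩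
    rcases corner hiso hcov hXq hc11 with hb | hb
    · -- HZ 1 1 ∈ C : the cell (1,2) can never be covered in the strip
      have hc12 : ((1,2) : ℤ × ℤ) ∈ {z : ℤ × ℤ | 1 ≤ z.1 ∧ 1 ≤ z.2 ∧ z.2 ≤ 2} :=
        ⟨by norm_num, by norm_num, by norm_num⟩
      obtain ⟨Q, hQ, hzQ⟩ := (hcov _).1 hc12
      have hy : ∀ z ∈ Q, (1:ℤ) ≤ z.1 ∧ (1:ℤ) ≤ z.2 ∧ z.2 ≤ 2 :=
        fun z hz => hmem Q hQ z hz
      have hne : Q ≠ HZ 1 1 := by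
        intro h
        rw [h] at hzQ
        have := mem_HZ.1 hzQ
        omega
      have clash : ∀ z : ℤ × ℤ, z ∈ Q → z ∈ HZ 1 1 → False :=
        fun z hzq hzp => hdisj Q hQ _ hb hne z hzq hzp
      obtain ⟨a, b, hs | hs | hs | hs⟩ := isoCopy_cases (hiso Q hQ) <;> subst hs
      · have c1 : (1:ℤ) ≤ a ∧ (1:ℤ) ≤ b ∧ b ≤ 2 := hy (a,b) (mem_HZ.2 (by omega))
        have c3 : (1:ℤ) ≤ a+1 ∧ (1:ℤ) ≤ b+1 ∧ b+1 ≤ 2 :=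
          hy (a+1,b+1) (mem_HZ.2 (by omega))
        rcases mem_HZ.1 hzQ with h | h | h | h <;> omega
      · have c1 : (1:ℤ) ≤ a ∧ (1:ℤ) ≤ b+1 ∧ b+1 ≤ 2 :=
          hy (a,b+1) (mem_SS.2 (by omega))
        rcases mem_SS.1 hzQ with h | h | h | h
        · -- (1,2) = (a,b+1), i.e. a = 1, b = 1 : clash with HZ 1 1 at (2,1)
          exact absurd (clash (a+1,b) (mem_SS.2 (by omega)) (mem_HZ.2 (by omega)))
            not_false
        · omega
        · omega
        · omega
      · have c1 : (1:ℤ) ≤ a ∧ (1:ℤ) ≤ b+2 ∧ b+2 ≤ 2 :=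
          hy (a,b+2) (mem_V1.2 (by omega))
        have c3 : (1:ℤ) ≤ a+1 ∧ (1:ℤ) ≤ b ∧ b ≤ 2 := hy (a+1,b) (mem_V1.2 (by omega))
        omega
      · have c1 : (1:ℤ) ≤ a ∧ (1:ℤ) ≤ b ∧ b ≤ 2 := hy (a,b) (mem_V2.2 (by omega))
        have c4 : (1:ℤ) ≤ a+1 ∧ (1:ℤ) ≤ b+2 ∧ b+2 ≤ 2 :=
          hy (a+1,b+2) (mem_V2.2 (by omega))
        omega
    · -- V2 1 1 ∈ C contains (2,3), outside the strip
      have h23 := hmem _ hb (2,3) (mem_V2.2 (by omega))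
      have : (3:ℤ) ≤ 2 := h23.2.2
      omega
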